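/- Let α, β ∈ ℂ be the two roots of x² − (1+i)x + 1, i.e. complex numbers satisfying α + β = 1 + i and αβ = 1, where i denotes the imaginary unit. Then the complex conjugate of β has minimal polynomial x⁴ − 2x³ + 4x² − 2x + 1 over ℚ. -/

import Mathlib

open Polynomial

lemma gZ_irred : Irreducible (X^4 + 2*X^3 + 4*X^2 + 4*X + 2 : ℤ[X]) := by
  have hmon : (X^4 + 2*X^3 + 4*X^2 + 4*X + 2 : ℤ[X]).Monic := by
    monicity!
  have hdeg : (X^4 + 2*X^3 + 4*X^2 + 4*X + 2 : ℤ[X]).degree = 4 := by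
    compute_degree!
  apply irreducible_of_eisenstein_criterion (P := Ideal.span {(2:ℤ)})
  · rw [Ideal.span_singleton_prime (by norm_num)]; exact Int.prime_two
  · rw [hmon.leadingCoeff, Ideal.mem_span_singleton]; norm_num
  · intro n hn
    rw [hdeg] at hn
    rw [Ideal.mem_span_singleton]
    have hn4 : n < 4 := by exact_mod_cast hn
    interval_cases n <;> norm_num [coeff_X]
  · rw [hdeg]; norm_num
  · rw [Ideal.span_singleton_pow, Ideal.mem_span_singleton]
    simp
  · exact hmon.isPrimitive

lemma fZ_irred : Irreducible (X^4 - 2*X^3 + 4*X^2 - 2*X + 1 : ℤ[X]) := by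
  have := (MulEquiv.irreducible_iff (algEquivAevalXAddC (1:ℤ)).toMulEquiv
      (x := (X^4 - 2*X^3 + 4*X^2 - 2*X + 1 : ℤ[X]))).mp
  apply this
  have : (algEquivAevalXAddC (1:ℤ)).toMulEquiv (X^4 - 2*X^3 + 4*X^2 - 2*X + 1 : ℤ[X])
      = (X^4 + 2*X^3 + 4*X^2 + 4*X + 2 : ℤ[X]) := by
    simp [algEquivAevalXAddC, map_ofNat]
    ring
  rw [this]
  exact gZ_irred

lemma fQ_irred : Irreducible (X^4 - 2*X^3 + 4*X^2 - 2*X + 1 : ℚ[X]) := by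
  have hmon : (X^4 - 2*X^3 + 4*X^2 - 2*X + 1 : ℤ[X]).Monic := by monicity!
  have := (hmon.irreducible_iff_irreducible_map_fraction_map (K := ℚ)).mp fZ_irred
  have hmap : (X^4 - 2*X^3 + 4*X^2 - 2*X + 1 : ℤ[X]).map (algebraMap ℤ ℚ)
      = (X^4 - 2*X^3 + 4*X^2 - 2*X + 1 : ℚ[X]) := by
    simp [Polynomial.map_add, Polynomial.map_sub, Polynomial.map_mul, Polynomial.map_pow,
      Polynomial.map_ofNat]
  rwa [hmap] at this

theorem minpoly_conj_beta (α β : ℂ)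
    (hsum : α + β = 1 + Complex.I) (hprod : α * β = 1) :
    minpoly ℚ ((starRingEnd ℂ) β) = X ^ 4 - 2 * X ^ 3 + 4 * X ^ 2 - 2 * X + 1 := by
  set z := (starRingEnd ℂ) β with hz
  have hβ : β^2 - (1 + Complex.I)*β + 1 = 0 := by
    have : α = 1 + Complex.I - β := by linear_combination hsum
    rw [this] at hprod
    linear_combination -hprod
  have hzq : z^2 - (1 - Complex.I)*z + 1 = 0 := by
    have := congrArg (starRingEnd ℂ) hβ
    simpa [map_sub, map_add, map_mul, map_pow, Complex.conj_I, sub_eq_add_neg] using this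
  have hroot : (Polynomial.aeval z) (X^4 - 2*X^3 + 4*X^2 - 2*X + 1 : ℚ[X]) = 0 := by
    simp only [map_add, map_sub, map_mul, map_pow, map_one, aeval_X, map_ofNat]
    linear_combination (z^2 - (1 + Complex.I)*z + 1) * hzq + z^2 * Complex.I_sq
  have hmon : (X^4 - 2*X^3 + 4*X^2 - 2*X + 1 : ℚ[X]).Monic := by monicity!
  exact (minpoly.eq_of_irreducible_of_monic fQ_irred hroot hmon).symm
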